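/- For every integer n ≥ 3 and every k with 0 ≤ k ≤ n, the coefficient of μ^k in the polynomial (D_n ∘ D_{n−1} ∘ ⋯ ∘ D_1)(S_n) equals the coefficient of μ^k z^0 in the Laurent polynomial det 𝓛_n; that is, the quantum relations QS^k_n coincide with the conserved quantities P^k_n of the periodic one-dimensional Toda lattice. -/

import Mathlib

set_option maxHeartbeats 1000000


open MvPolynomial

/-- Index type for the variables `X_0, …, X_{n-1}` (as `some (Sum.inl i)`),
`Q_0, …, Q_{n-1}` (as `some (Sum.inr i)`) and `μ` (as `none`). -/
abbrev TodaIdx (n : ℕ) := Option (Fin n ⊕ Fin n)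

/-- The polynomial ring `R = ℂ[X_1,…,X_n,Q_1,…,Q_n,μ]` (indices written `0,…,n-1`). -/
abbrev TodaR (n : ℕ) := MvPolynomial (TodaIdx n) ℂ

/-- The variable `X_i`. -/
noncomputable def Xv {n : ℕ} (i : Fin n) : TodaR n := X (some (Sum.inl i))

/-- The variable `Q_i`. -/
noncomputable def Qv {n : ℕ} (i : Fin n) : TodaR n := X (some (Sum.inr i))

/-- The variable `μ`. -/
noncomputable def muv {n : ℕ} : TodaR n := X none

/-- Cyclic successor on indices: `i + 1` read modulo `n`. -/
def finSucc {n : ℕ} (i : Fin n) : Fin n := ⟨((i : ℕ) + 1) % n, Nat.mod_lt _ i.pos⟩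

/-- The differential operator `D_i = Id + Q_i ∂²/(∂X_i ∂X_{i+1})`,
indices read modulo `n`. -/
noncomputable def Dop {n : ℕ} (i : Fin n) (F : TodaR n) : TodaR n :=
  F + Qv i * pderiv (some (Sum.inl i)) (pderiv (some (Sum.inl (finSucc i))) F)

/-- The differential operator `δ_i = Id - Q_i ∂²/(∂X_i ∂X_{i+1})`. -/
noncomputable def dop {n : ℕ} (i : Fin n) (F : TodaR n) : TodaR n :=
  F - Qv i * pderiv (some (Sum.inl i)) (pderiv (some (Sum.inl (finSucc i))) F)

/-- The determinant `O_{[a,b]}` of the tridiagonal matrix with diagonal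
`X_a+μ, …, X_b+μ`, superdiagonal `Q_a, …, Q_{b-1}` and subdiagonal entries `-1`. -/
noncomputable def OI (n a b : ℕ) (hb : b < n) : TodaR n :=
  Matrix.det (Matrix.of fun i j : Fin (b + 1 - a) =>
    if (i : ℕ) = j then Xv ⟨a + i, by have := i.isLt; omega⟩ + muv
    else if (i : ℕ) + 1 = j then Qv ⟨a + i, by have := i.isLt; omega⟩
    else if (j : ℕ) + 1 = i then -1 else 0)

/-- The determinant `O_k` of the `k×k` tridiagonal matrix with diagonal
`X_0+μ, …, X_{k-1}+μ`, superdiagonal `Q_0, …, Q_{k-2}` and subdiagonal entries `-1`;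
`O_0 = 1`. -/
noncomputable def Omat (n k : ℕ) (h : k ≤ n) : TodaR n :=
  Matrix.det (Matrix.of fun i j : Fin k =>
    if (i : ℕ) = j then Xv ⟨i, by have := i.isLt; omega⟩ + muv
    else if (i : ℕ) + 1 = j then Qv ⟨i, by have := i.isLt; omega⟩
    else if (j : ℕ) + 1 = i then -1 else 0)

/-- `S_n = ∏ (X_i + μ)`. -/
noncomputable def Sn (n : ℕ) : TodaR n := ∏ i : Fin n, (Xv i + muv)

/-- The composite `D_{m-1} ∘ ⋯ ∘ D_1 ∘ D_0` (applied with `D_0` first). -/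
noncomputable def DfoldUpTo (n m : ℕ) (h : m ≤ n) (F : TodaR n) : TodaR n :=
  ((List.finRange m).map (Fin.castLE h)).foldl (fun acc i => Dop i acc) F

/-- The periodic Toda matrix `𝓛_n` over the Laurent polynomials in `z` with
coefficients in `R`: tridiagonal as in `Omat n n`, with corner entries
`(𝓛_n)_{0,n-1} = -z` and `(𝓛_n)_{n-1,0} = Q_{n-1} z⁻¹`. -/
noncomputable def Lmat (n : ℕ) (hn : 3 ≤ n) :
    Matrix (Fin n) (Fin n) (LaurentPolynomial (TodaR n)) :=
  Matrix.of fun i j =>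
    if (i : ℕ) = 0 ∧ (j : ℕ) = n - 1 then -(LaurentPolynomial.T 1)
    else if (i : ℕ) = n - 1 ∧ (j : ℕ) = 0 then
      LaurentPolynomial.C (Qv ⟨n - 1, by omega⟩) * LaurentPolynomial.T (-1)
    else if (i : ℕ) = j then LaurentPolynomial.C (Xv i + muv)
    else if (i : ℕ) + 1 = j then LaurentPolynomial.C (Qv i)
    else if (j : ℕ) + 1 = i then -1 else 0

namespace TodaAux

noncomputable def pd {n : ℕ} (j : Fin n) : TodaR n → TodaR n :=
  fun F => pderiv (some (Sum.inl j)) F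

lemma pd_add {n : ℕ} (j : Fin n) (F G : TodaR n) : pd j (F + G) = pd j F + pd j G := by
  simp [pd]

lemma pd_mul {n : ℕ} (j : Fin n) (F G : TodaR n) :
    pd j (F * G) = pd j F * G + F * pd j G := by
  simp [pd, pderiv_mul]; ring

lemma pd_Xv_self {n : ℕ} (j : Fin n) : pd j (Xv j) = 1 := by
  simp [pd, Xv, pderiv_X_self]

lemma pd_Xv_ne {n : ℕ} (j i : Fin n) (h : i ≠ j) : pd j (Xv i) = 0 := by
  simp only [pd, Xv]
  exact pderiv_X_of_ne (by simpa using h)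

lemma pd_Qv {n : ℕ} (j i : Fin n) : pd j (Qv i) = 0 := by
  simp only [pd, Qv]
  exact pderiv_X_of_ne (by simp)

lemma pd_muv {n : ℕ} (j : Fin n) : pd j (muv : TodaR n) = 0 := by
  simp only [pd, muv]
  exact pderiv_X_of_ne (by simp)

lemma pd_one {n : ℕ} (j : Fin n) : pd j (1 : TodaR n) = 0 := by simp [pd]

def idx (N m : ℕ) : Fin (N + 3) := ⟨m % (N + 3), Nat.mod_lt _ (by omega)⟩

lemma idx_eq (N m : ℕ) (h : m < N + 3) : idx N m = ⟨m, h⟩ := by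
  simp [idx, Fin.ext_iff, Nat.mod_eq_of_lt h]

noncomputable def oP (N : ℕ) : ℕ → TodaR (N + 3)
  | 0 => 1
  | 1 => Xv (idx N 0) + muv
  | (k + 2) => (Xv (idx N (k + 1)) + muv) * oP N (k + 1) + Qv (idx N k) * oP N k

noncomputable def pP (N : ℕ) : ℕ → TodaR (N + 3)
  | 0 => 0
  | 1 => 1
  | (k + 2) => (Xv (idx N (k + 1)) + muv) * pP N (k + 1) + Qv (idx N k) * pP N k

noncomputable def pf (N : ℕ) (m : ℕ) : TodaR (N + 3) :=
  if h : m < N + 3 then (Xv ⟨m, h⟩ + muv) * pf N (m + 1) else 1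
  termination_by N + 3 - m

lemma pf_of_lt {N m : ℕ} (h : m < N + 3) :
    pf N m = (Xv ⟨m, h⟩ + muv) * pf N (m + 1) := by
  rw [pf]; simp [h]

lemma pf_of_ge {N m : ℕ} (h : ¬ m < N + 3) : pf N m = 1 := by
  rw [pf]; simp [h]

lemma pd_pf_zero (N : ℕ) (m : ℕ) (j : Fin (N + 3)) (h : (j : ℕ) < m) :
    pd j (pf N m) = 0 := by
  by_cases hm : m < N + 3
  · rw [pf_of_lt hm, pd_mul, pd_add, pd_muv,
      pd_Xv_ne _ _ (Fin.ne_of_val_ne (show m ≠ (j : ℕ) by omega)),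
      pd_pf_zero N (m + 1) j (by omega)]
    ring
  · rw [pf_of_ge hm, pd_one]
  termination_by N + 3 - m

lemma pd_pf_self (N : ℕ) (m : ℕ) (h : m < N + 3) :
    pd ⟨m, h⟩ (pf N m) = pf N (m + 1) := by
  rw [pf_of_lt h, pd_mul, pd_add, pd_muv, pd_Xv_self,
    pd_pf_zero N (m + 1) ⟨m, h⟩ (show m < m + 1 by omega)]
  ring

lemma pf_eq_prod (N : ℕ) (m : ℕ) :
    pf N m = ∏ i ∈ Finset.univ.filter (fun i : Fin (N + 3) => m ≤ (i : ℕ)), (Xv i + muv) := by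
  by_cases hm : m < N + 3
  · rw [pf_of_lt hm, pf_eq_prod N (m + 1)]
    rw [show (Finset.univ.filter (fun i : Fin (N + 3) => m ≤ (i : ℕ))) =
        insert ⟨m, hm⟩ (Finset.univ.filter (fun i : Fin (N + 3) => m + 1 ≤ (i : ℕ))) by
      ext i
      simp only [Finset.mem_filter, Finset.mem_univ, true_and, Finset.mem_insert, Fin.ext_iff]
      omega]
    rw [Finset.prod_insert (by simp)]
  · rw [pf_of_ge hm]
    rw [Finset.prod_eq_one]
    intro i hi
    simp only [Finset.mem_filter] at hi
    exact absurd (lt_of_le_of_lt hi.2 i.isLt) (by omega)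
  termination_by N + 3 - m

lemma Sn_eq_pf (N : ℕ) : Sn (N + 3) = pf N 0 := by
  rw [pf_eq_prod, Sn]
  congr 1
  ext i
  simp

lemma pd_oP_zero (N : ℕ) : ∀ (k : ℕ) (j : Fin (N + 3)), k ≤ (j : ℕ) → pd j (oP N k) = 0
  | 0, j, _ => by rw [oP]; exact pd_one j
  | 1, j, h => by
      have hj := j.isLt
      rw [oP, pd_add, pd_muv, idx_eq N 0 (by omega),
        pd_Xv_ne _ _ (Fin.ne_of_val_ne (show (0 : ℕ) ≠ (j : ℕ) by omega))]
      ring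
  | (k + 2), j, h => by
      have hj := j.isLt
      rw [oP, pd_add, pd_mul, pd_mul, pd_add, pd_muv, pd_Qv,
        idx_eq N (k + 1) (by omega),
        pd_Xv_ne _ _ (Fin.ne_of_val_ne (show k + 1 ≠ (j : ℕ) by omega)),
        pd_oP_zero N (k + 1) j (by omega), pd_oP_zero N k j (by omega)]
      ring

lemma pd_pP_zero (N : ℕ) : ∀ (k : ℕ) (j : Fin (N + 3)), k ≤ (j : ℕ) → pd j (pP N k) = 0
  | 0, j, _ => by rw [pP]; simp [pd]
  | 1, j, _ => by rw [pP]; exact pd_one j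
  | (k + 2), j, h => by
      have hj := j.isLt
      rw [pP, pd_add, pd_mul, pd_mul, pd_add, pd_muv, pd_Qv,
        idx_eq N (k + 1) (by omega),
        pd_Xv_ne _ _ (Fin.ne_of_val_ne (show k + 1 ≠ (j : ℕ) by omega)),
        pd_pP_zero N (k + 1) j (by omega), pd_pP_zero N k j (by omega)]
      ring

lemma pd0_oP (N : ℕ) : ∀ (k : ℕ), k ≤ N + 2 →
    pd (⟨0, by omega⟩ : Fin (N + 3)) (oP N k) = pP N k
  | 0, _ => by rw [oP, pP]; exact pd_one _
  | 1, _ => by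
      rw [oP, pP, pd_add, pd_muv, idx_eq N 0 (by omega), pd_Xv_self]
      ring
  | (k + 2), h => by
      rw [oP, pP, pd_add, pd_mul, pd_mul, pd_add, pd_muv, pd_Qv,
        idx_eq N (k + 1) (by omega),
        pd_Xv_ne _ _ (Fin.ne_of_val_ne (show k + 1 ≠ (0 : ℕ) by omega)),
        pd0_oP N (k + 1) (by omega), pd0_oP N k (by omega)]
      ring

lemma DfoldUpTo_succ (n m : ℕ) (h : m + 1 ≤ n) (F : TodaR n) :
    DfoldUpTo n (m + 1) h F = Dop ⟨m, h⟩ (DfoldUpTo n m (by omega) F) := by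
  unfold DfoldUpTo
  rw [List.finRange_succ_last, List.map_append, List.foldl_append]
  rw [show (List.map (Fin.castLE h) [Fin.last m]) = [(⟨m, h⟩ : Fin n)] from rfl]
  rw [List.map_map]
  rw [show Fin.castLE h ∘ Fin.castSucc = Fin.castLE (show m ≤ n by omega) from
    funext fun i => Fin.ext rfl]
  rfl

lemma DfoldUpTo_zero (n : ℕ) (h : 0 ≤ n) (F : TodaR n) : DfoldUpTo n 0 h F = F := rfl

lemma Dop_eq (n : ℕ) (i : Fin n) (F : TodaR n) :
    Dop i F = F + Qv i * pd i (pd (finSucc i) F) := rfl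

lemma foldA (N : ℕ) : ∀ (m : ℕ), 1 ≤ m → m ≤ N + 2 → ∀ (h : m ≤ N + 3),
    DfoldUpTo (N + 3) m h (Sn (N + 3)) =
      oP N m * pf N m + Qv (idx N (m - 1)) * (oP N (m - 1) * pf N (m + 1))
  | 0, h1, _, _ => by omega
  | 1, _, _, h => by
      have h1 : (1 : ℕ) < N + 3 := by omega
      have key : DfoldUpTo (N + 3) 1 h (Sn (N + 3)) =
          Dop ⟨0, h⟩ (DfoldUpTo (N + 3) 0 (by omega) (Sn (N + 3))) :=
        DfoldUpTo_succ (N + 3) 0 h (Sn (N + 3))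
      rw [key, DfoldUpTo_zero, Dop_eq]
      have hfs : finSucc (⟨0, h⟩ : Fin (N + 3)) = ⟨1, h1⟩ := by
        simp [finSucc, Fin.ext_iff, Nat.mod_eq_of_lt h1]
      rw [hfs, Sn_eq_pf]
      have e4 : pd (⟨1, h1⟩ : Fin (N + 3)) (pf N (0 + 1)) = pf N 2 :=
        pd_pf_self N 1 h1
      have e0 : pd (⟨1, h1⟩ : Fin (N + 3)) (pf N 0) = (Xv ⟨0, h⟩ + muv) * pf N 2 := by
        rw [pf_of_lt (show 0 < N + 3 by omega), pd_mul, pd_add, pd_muv,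
          pd_Xv_ne _ _ (Fin.ne_of_val_ne (show (0 : ℕ) ≠ (1 : ℕ) by omega)), e4]
        ring
      rw [e0]
      have e5 : pd (⟨0, h⟩ : Fin (N + 3)) ((Xv ⟨0, h⟩ + muv) * pf N 2) = pf N 2 := by
        rw [pd_mul, pd_add, pd_muv, pd_Xv_self,
          pd_pf_zero N 2 ⟨0, h⟩ (show (0 : ℕ) < 2 by omega)]
        ring
      rw [e5]
      have hoP1 : oP N 1 = Xv (idx N 0) + muv := rfl
      have hoP0 : oP N 0 = 1 := rfl
      rw [hoP1, hoP0, idx_eq N 0 (show 0 < N + 3 by omega),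
        pf_of_lt (show 0 < N + 3 by omega)]
      ring
  | (m + 2), _, h2, h => by
      have hm2 : m + 2 < N + 3 := by omega
      have hm1 : m + 1 < N + 3 := by omega
      have key : DfoldUpTo (N + 3) (m + 2) h (Sn (N + 3)) =
          Dop ⟨m + 1, h⟩ (DfoldUpTo (N + 3) (m + 1) (by omega) (Sn (N + 3))) :=
        DfoldUpTo_succ (N + 3) (m + 1) h (Sn (N + 3))
      rw [key, Dop_eq, foldA N (m + 1) (by omega) (by omega) (by omega)]
      simp only [Nat.add_sub_cancel]
      rw [show m + 2 - 1 = m + 1 from rfl]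
      have hfs : finSucc (⟨m + 1, h⟩ : Fin (N + 3)) = ⟨m + 2, hm2⟩ := by
        simp [finSucc, Fin.ext_iff, Nat.mod_eq_of_lt hm2]
      rw [hfs]
      have e1 : pd (⟨m + 2, hm2⟩ : Fin (N + 3)) (oP N (m + 1)) = 0 :=
        pd_oP_zero N (m + 1) ⟨m + 2, hm2⟩ (show m + 1 ≤ m + 2 by omega)
      have e2 : pd (⟨m + 2, hm2⟩ : Fin (N + 3)) (oP N m) = 0 :=
        pd_oP_zero N m ⟨m + 2, hm2⟩ (show m ≤ m + 2 by omega)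
      have e4 : pd (⟨m + 2, hm2⟩ : Fin (N + 3)) (pf N (m + 1 + 1)) = pf N (m + 3) :=
        pd_pf_self N (m + 2) hm2
      have e3 : pd (⟨m + 2, hm2⟩ : Fin (N + 3)) (pf N (m + 1)) =
          (Xv ⟨m + 1, hm1⟩ + muv) * pf N (m + 3) := by
        rw [pf_of_lt hm1, pd_mul, pd_add, pd_muv,
          pd_Xv_ne _ _ (Fin.ne_of_val_ne (show m + 1 ≠ m + 2 by omega)), e4]
        ring
      have E1 : pd (⟨m + 2, hm2⟩ : Fin (N + 3))
          (oP N (m + 1) * pf N (m + 1) + Qv (idx N m) * (oP N m * pf N (m + 1 + 1))) =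
          oP N (m + 1) * ((Xv ⟨m + 1, hm1⟩ + muv) * pf N (m + 3)) +
            Qv (idx N m) * (oP N m * pf N (m + 3)) := by
        rw [pd_add, pd_mul, pd_mul, pd_mul, e1, e2, e3, pd_Qv, e4]
        ring
      rw [E1]
      have f1 : pd (⟨m + 1, h⟩ : Fin (N + 3)) (oP N (m + 1)) = 0 :=
        pd_oP_zero N (m + 1) ⟨m + 1, h⟩ (show m + 1 ≤ m + 1 by omega)
      have f2 : pd (⟨m + 1, h⟩ : Fin (N + 3)) (oP N m) = 0 :=
        pd_oP_zero N m ⟨m + 1, h⟩ (show m ≤ m + 1 by omega)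
      have f3 : pd (⟨m + 1, h⟩ : Fin (N + 3)) (pf N (m + 3)) = 0 :=
        pd_pf_zero N (m + 3) ⟨m + 1, h⟩ (show m + 1 < m + 3 by omega)
      have E2 : pd (⟨m + 1, h⟩ : Fin (N + 3))
          (oP N (m + 1) * ((Xv ⟨m + 1, hm1⟩ + muv) * pf N (m + 3)) +
            Qv (idx N m) * (oP N m * pf N (m + 3))) =
          oP N (m + 1) * pf N (m + 3) := by
        rw [pd_add, pd_mul, pd_mul, pd_mul, pd_mul, pd_add, pd_muv, f1, f2, f3, pd_Qv,
          pd_Xv_self]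
        ring
      rw [E2]
      have hoP : oP N (m + 2) =
          (Xv (idx N (m + 1)) + muv) * oP N (m + 1) + Qv (idx N m) * oP N m := rfl
      rw [hoP, idx_eq N (m + 1) hm1, pf_of_lt hm1,
        show pf N (m + 2 + 1) = pf N (m + 3) from rfl,
        show pf N (m + 1 + 1) = pf N (m + 2) from rfl]
      ring

lemma fold_total (N : ℕ) :
    DfoldUpTo (N + 3) (N + 3) le_rfl (Sn (N + 3)) =
      oP N (N + 3) + Qv ⟨N + 2, by omega⟩ * pP N (N + 2) := by
  have hoP3 : oP N (N + 3) =
      (Xv (idx N (N + 2)) + muv) * oP N (N + 2) + Qv (idx N (N + 1)) * oP N (N + 1) := rfl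
  have hstep : DfoldUpTo (N + 3) (N + 2) (by omega) (Sn (N + 3)) = oP N (N + 3) := by
    rw [foldA N (N + 2) (by omega) (by omega) (by omega)]
    rw [show N + 2 - 1 = N + 1 from rfl]
    rw [pf_of_ge (show ¬ N + 2 + 1 < N + 3 by omega),
      pf_of_lt (show N + 2 < N + 3 by omega),
      pf_of_ge (show ¬ N + 2 + 1 < N + 3 by omega),
      hoP3, idx_eq N (N + 2) (by omega)]
    ring
  have key : DfoldUpTo (N + 3) (N + 3) le_rfl (Sn (N + 3)) =
      Dop ⟨N + 2, by omega⟩ (DfoldUpTo (N + 3) (N + 2) (by omega) (Sn (N + 3))) :=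
    DfoldUpTo_succ (N + 3) (N + 2) (by omega) (Sn (N + 3))
  rw [key, Dop_eq, hstep]
  have hfs : finSucc (⟨N + 2, by omega⟩ : Fin (N + 3)) = ⟨0, by omega⟩ := by
    simp [finSucc, Fin.ext_iff]
  rw [hfs]
  have g1 : pd (⟨0, by omega⟩ : Fin (N + 3)) (oP N (N + 3)) =
      (Xv (idx N (N + 2)) + muv) * pP N (N + 2) + Qv (idx N (N + 1)) * pP N (N + 1) := by
    rw [hoP3, pd_add, pd_mul, pd_mul, pd_add, pd_muv, pd_Qv,
      idx_eq N (N + 2) (by omega),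
      pd_Xv_ne _ _ (Fin.ne_of_val_ne (show N + 2 ≠ (0 : ℕ) by omega)),
      pd0_oP N (N + 2) (by omega), pd0_oP N (N + 1) (by omega)]
    ring
  rw [g1]
  have g2 : pd (⟨N + 2, by omega⟩ : Fin (N + 3))
      ((Xv (idx N (N + 2)) + muv) * pP N (N + 2) + Qv (idx N (N + 1)) * pP N (N + 1)) =
      pP N (N + 2) := by
    rw [pd_add, pd_mul, pd_mul, pd_add, pd_muv, pd_Qv,
      idx_eq N (N + 2) (by omega), pd_Xv_self,
      pd_pP_zero N (N + 2) ⟨N + 2, by omega⟩ (show N + 2 ≤ N + 2 by omega),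
      pd_pP_zero N (N + 1) ⟨N + 2, by omega⟩ (show N + 1 ≤ N + 2 by omega)]
    ring
  rw [g2]


open LaurentPolynomial

/-! ### Tridiagonal matrices over `TodaR` and their determinants -/

/-- Tridiagonal matrix of size `k` with diagonal starting at `X_a`. -/
noncomputable def Mt (N a k : ℕ) : Matrix (Fin k) (Fin k) (TodaR (N + 3)) :=
  Matrix.of fun i j =>
    if (i : ℕ) = j then Xv (idx N (a + i)) + muv
    else if (i : ℕ) + 1 = j then Qv (idx N (a + i))
    else if (j : ℕ) + 1 = i then -1 else 0

lemma coe_succAbove {m : ℕ} (p : Fin (m + 1)) (i : Fin m) :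
    ((p.succAbove i : Fin (m + 1)) : ℕ) =
      if (i : ℕ) < (p : ℕ) then (i : ℕ) else (i : ℕ) + 1 := by
  rcases lt_or_ge ((i : ℕ)) ((p : ℕ)) with h | h
  · rw [Fin.succAbove_of_castSucc_lt _ _ (by rwa [Fin.lt_def]), if_pos h, Fin.coe_castSucc]
  · rw [Fin.succAbove_of_le_castSucc _ _ (by rwa [Fin.le_def]), if_neg (not_lt.mpr h),
      Fin.val_succ]

lemma Mt_apply (N a k : ℕ) (i j : Fin k) : Mt N a k i j =
    if (i : ℕ) = (j : ℕ) then Xv (idx N (a + i)) + muv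
    else if (i : ℕ) + 1 = j then Qv (idx N (a + i))
    else if (j : ℕ) + 1 = i then -1 else 0 := rfl

lemma Mt_det_rec (N a k : ℕ) :
    (Mt N a (k + 2)).det =
      (Xv (idx N (a + (k + 1))) + muv) * (Mt N a (k + 1)).det +
        Qv (idx N (a + k)) * (Mt N a k).det := by
  have hexp := Matrix.det_succ_row (Mt N a (k + 2)) (Fin.last (k + 1))
  rw [hexp, Fin.sum_univ_castSucc, Fin.sum_univ_castSucc]
  have hzero : ∀ j : Fin k,
      (-1 : TodaR (N + 3)) ^ ((Fin.last (k + 1) : ℕ) + ((j.castSucc.castSucc : Fin (k + 2)) : ℕ)) *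
        Mt N a (k + 2) (Fin.last (k + 1)) j.castSucc.castSucc *
        ((Mt N a (k + 2)).submatrix (Fin.last (k + 1)).succAbove
          (j.castSucc.castSucc).succAbove).det = 0 := by
    intro j
    have hj := j.isLt
    have hv : ((j.castSucc.castSucc : Fin (k + 2)) : ℕ) = (j : ℕ) := rfl
    have h0 : Mt N a (k + 2) (Fin.last (k + 1)) j.castSucc.castSucc = 0 := by
      rw [Mt_apply, hv, Fin.val_last, if_neg (by omega), if_neg (by omega), if_neg (by omega)]
    rw [h0, mul_zero, zero_mul]
  rw [Finset.sum_eq_zero (fun j _ => hzero j), zero_add]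
  have hsub2 : (Mt N a (k + 2)).submatrix (Fin.last (k + 1)).succAbove
      (Fin.last (k + 1)).succAbove = Mt N a (k + 1) := by
    ext i j
    have hr : (((Fin.last (k + 1)).succAbove i : Fin (k + 2)) : ℕ) = (i : ℕ) := by
      rw [coe_succAbove, if_pos (by rw [Fin.val_last]; omega)]
    have hc : (((Fin.last (k + 1)).succAbove j : Fin (k + 2)) : ℕ) = (j : ℕ) := by
      rw [coe_succAbove, if_pos (by rw [Fin.val_last]; omega)]
    rw [Matrix.submatrix_apply, Mt_apply, Mt_apply, hr, hc]
  have hdiag : Mt N a (k + 2) (Fin.last (k + 1)) (Fin.last (k + 1)) =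
      Xv (idx N (a + (k + 1))) + muv := by
    rw [Mt_apply, Fin.val_last, if_pos rfl]
  have hsign2 : (-1 : TodaR (N + 3)) ^ ((Fin.last (k + 1) : ℕ) + (Fin.last (k + 1) : ℕ)) = 1 := by
    rw [Fin.val_last]
    exact Even.neg_one_pow ⟨k + 1, by ring⟩
  have hcv : (((Fin.last k).castSucc : Fin (k + 2)) : ℕ) = k := rfl
  have hsubcol : Mt N a (k + 2) (Fin.last (k + 1)) ((Fin.last k).castSucc) = -1 := by
    rw [Mt_apply, hcv, Fin.val_last, if_neg (by omega), if_neg (by omega), if_pos (by omega)]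
  have hsign1 : (-1 : TodaR (N + 3)) ^
      ((Fin.last (k + 1) : ℕ) + (((Fin.last k).castSucc : Fin (k + 2)) : ℕ)) = -1 := by
    rw [hcv, Fin.val_last, show k + 1 + k = 2 * k + 1 by omega]
    exact Odd.neg_one_pow ⟨k, by ring⟩
  have hminor : ((Mt N a (k + 2)).submatrix (Fin.last (k + 1)).succAbove
      ((Fin.last k).castSucc).succAbove).det = Qv (idx N (a + k)) * (Mt N a k).det := by
    set S := (Mt N a (k + 2)).submatrix (Fin.last (k + 1)).succAbove
      ((Fin.last k).castSucc).succAbove with hS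
    have hSval : ∀ (i j : Fin (k + 1)), S i j =
        Mt N a (k + 2) ((Fin.last (k + 1)).succAbove i) (((Fin.last k).castSucc).succAbove j) :=
      fun i j => rfl
    have hrowv : ∀ i : Fin (k + 1), (((Fin.last (k + 1)).succAbove i : Fin (k + 2)) : ℕ) = (i : ℕ) := by
      intro i
      rw [coe_succAbove, if_pos (by rw [Fin.val_last]; omega)]
    have hcolv : ∀ j : Fin (k + 1), ((((Fin.last k).castSucc).succAbove j : Fin (k + 2)) : ℕ) =
        if (j : ℕ) < k then (j : ℕ) else (j : ℕ) + 1 := by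
      intro j
      rw [coe_succAbove, hcv]
    have hclast : ((((Fin.last k).castSucc).succAbove (Fin.last k) : Fin (k + 2)) : ℕ) = k + 1 := by
      rw [hcolv, Fin.val_last, if_neg (by omega)]
    have hcol := Matrix.det_succ_column S (Fin.last k)
    rw [hcol, Fin.sum_univ_castSucc]
    have hz : ∀ i : Fin k,
        (-1 : TodaR (N + 3)) ^ (((i.castSucc : Fin (k + 1)) : ℕ) + ((Fin.last k : Fin (k + 1)) : ℕ)) *
          S i.castSucc (Fin.last k) *
          (S.submatrix i.castSucc.succAbove (Fin.last k).succAbove).det = 0 := by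
      intro i
      have hi := i.isLt
      have h0 : S i.castSucc (Fin.last k) = 0 := by
        rw [hSval, Mt_apply, hrowv, hclast, Fin.coe_castSucc,
          if_neg (by omega), if_neg (by omega), if_neg (by omega)]
      rw [h0, mul_zero, zero_mul]
    rw [Finset.sum_eq_zero (fun i _ => hz i), zero_add]
    have hent : S (Fin.last k) (Fin.last k) = Qv (idx N (a + k)) := by
      rw [hSval, Mt_apply, hrowv, hclast, Fin.val_last, if_neg (by omega), if_pos (by omega)]
    have hsign : (-1 : TodaR (N + 3)) ^ (((Fin.last k : Fin (k + 1)) : ℕ) + ((Fin.last k : Fin (k + 1)) : ℕ)) = 1 := by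
      rw [Fin.val_last]
      exact Even.neg_one_pow ⟨k, by ring⟩
    have hrfull : ∀ i : Fin k,
        (((Fin.last (k + 1)).succAbove ((Fin.last k).succAbove i) : Fin (k + 2)) : ℕ) = (i : ℕ) := by
      intro i
      rw [hrowv, coe_succAbove, Fin.val_last, if_pos i.isLt]
    have hcfull : ∀ j : Fin k,
        ((((Fin.last k).castSucc).succAbove ((Fin.last k).succAbove j) : Fin (k + 2)) : ℕ) = (j : ℕ) := by
      intro j
      rw [hcolv, coe_succAbove, Fin.val_last, if_pos j.isLt, if_pos j.isLt]
    have hsub : S.submatrix (Fin.last k).succAbove (Fin.last k).succAbove = Mt N a k := by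
      ext i j
      rw [Matrix.submatrix_apply, hSval, Mt_apply, Mt_apply, hrfull, hcfull]
    rw [hent, hsign, hsub, one_mul]
  rw [hsub2, hdiag, hsign2, hsubcol, hsign1, hminor]
  ring

lemma det_Mt0 (N : ℕ) : ∀ k, (Mt N 0 k).det = oP N k
  | 0 => by rw [Matrix.det_fin_zero, oP]
  | 1 => by
      rw [Matrix.det_fin_one, oP, Mt_apply, if_pos rfl,
        show (0 : ℕ) + ((0 : Fin 1) : ℕ) = 0 by simp]
  | (k + 2) => by
      rw [Mt_det_rec, det_Mt0 N (k + 1), det_Mt0 N k, oP,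
        show 0 + (k + 1) = k + 1 by omega, show 0 + k = k by omega]

lemma det_Mt1 (N : ℕ) : ∀ k, (Mt N 1 k).det = pP N (k + 1)
  | 0 => by rw [Matrix.det_fin_zero, pP]
  | 1 => by
      rw [Matrix.det_fin_one, Mt_apply, if_pos rfl,
        show pP N 2 = (Xv (idx N 1) + muv) * pP N 1 + Qv (idx N 0) * pP N 0 from rfl,
        show pP N 1 = 1 from rfl, show pP N 0 = 0 from rfl,
        show (1 : ℕ) + (0 : Fin 1) = 1 by simp]
      ring
  | (k + 2) => by
      rw [Mt_det_rec, det_Mt1 N (k + 1), det_Mt1 N k,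
        show pP N (k + 2 + 1) = (Xv (idx N (k + 2)) + muv) * pP N (k + 2) +
          Qv (idx N (k + 1)) * pP N (k + 1) from rfl,
        show 1 + (k + 1) = k + 2 by omega, show 1 + k = k + 1 by omega]


/-! ### Decomposition of the periodic Toda determinant -/

noncomputable def rowT (N : ℕ) (i : Fin (N + 3)) :
    Fin (N + 3) → LaurentPolynomial (TodaR (N + 3)) := fun j =>
  if (i : ℕ) = j then LaurentPolynomial.C (Xv i + muv)
  else if (i : ℕ) + 1 = j then LaurentPolynomial.C (Qv i)
  else if (j : ℕ) + 1 = i then -1 else 0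

noncomputable def c0row (N : ℕ) : Fin (N + 3) → LaurentPolynomial (TodaR (N + 3)) := fun j =>
  if (j : ℕ) = N + 2 then -(T 1) else 0

noncomputable def cnrow (N : ℕ) : Fin (N + 3) → LaurentPolynomial (TodaR (N + 3)) := fun j =>
  if (j : ℕ) = 0 then LaurentPolynomial.C (Qv (⟨N + 2, by omega⟩ : Fin (N + 3))) * T (-1) else 0

noncomputable def Bmat (N : ℕ) :
    Matrix (Fin (N + 3)) (Fin (N + 3)) (LaurentPolynomial (TodaR (N + 3))) :=
  Matrix.of fun i j => rowT N i j

def i0 (N : ℕ) : Fin (N + 3) := ⟨0, by omega⟩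
def iN (N : ℕ) : Fin (N + 3) := ⟨N + 2, by omega⟩

lemma updateRow_comm {m : ℕ} {R : Type*} (M : Matrix (Fin m) (Fin m) R) {i j : Fin m}
    (h : i ≠ j) (u v : Fin m → R) :
    (M.updateRow i u).updateRow j v = (M.updateRow j v).updateRow i u := by
  ext a b
  by_cases haj : a = j
  · subst haj
    rw [Matrix.updateRow_self, Matrix.updateRow_ne h.symm, Matrix.updateRow_self]
  · rw [Matrix.updateRow_ne haj]
    by_cases hai : a = i
    · subst hai
      rw [Matrix.updateRow_self, Matrix.updateRow_self]
    · rw [Matrix.updateRow_ne hai, Matrix.updateRow_ne hai, Matrix.updateRow_ne haj]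

lemma Lmat_decomp (N : ℕ) (hn : 3 ≤ N + 3) :
    Lmat (N + 3) hn =
      ((Bmat N).updateRow (i0 N) (rowT N (i0 N) + c0row N)).updateRow (iN N)
        (rowT N (iN N) + cnrow N) := by
  have hcorner : (⟨N + 3 - 1, by omega⟩ : Fin (N + 3)) = ⟨N + 2, by omega⟩ :=
    Fin.ext (show N + 3 - 1 = N + 2 from by omega)
  refine Matrix.ext fun i j => ?_
  have hj3 := j.isLt
  by_cases hiN : i = iN N
  · subst hiN
    rw [Matrix.updateRow_self]
    show Lmat _ hn (iN N) j = rowT N (iN N) j + cnrow N j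
    simp only [Lmat, Matrix.of_apply, rowT, cnrow, Pi.add_apply]
    have hv : ((iN N : Fin (N + 3)) : ℕ) = N + 2 := rfl
    rw [hv, hcorner]
    split_ifs <;> first | (exfalso; first | omega | tauto) | rfl | simp
  · rw [Matrix.updateRow_ne hiN]
    have hiNv : (i : ℕ) ≠ N + 2 := fun hc => hiN (Fin.ext hc)
    by_cases hi0 : i = i0 N
    · subst hi0
      rw [Matrix.updateRow_self]
      show Lmat _ hn (i0 N) j = rowT N (i0 N) j + c0row N j
      simp only [Lmat, Matrix.of_apply, rowT, c0row, Pi.add_apply]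
      have hv : ((i0 N : Fin (N + 3)) : ℕ) = 0 := rfl
      rw [hv, hcorner]
      split_ifs <;> first | (exfalso; first | omega | tauto) | rfl | simp
    · rw [Matrix.updateRow_ne hi0]
      have hi0v : (i : ℕ) ≠ 0 := fun hc => hi0 (Fin.ext hc)
      show Lmat _ hn i j = rowT N i j
      simp only [Lmat, Matrix.of_apply, rowT]
      rw [hcorner]
      split_ifs <;> first | (exfalso; first | omega | tauto) | rfl | simp

lemma det_decomp (N : ℕ) (hn : 3 ≤ N + 3) :
    (Lmat (N + 3) hn).det =
      (Bmat N).det + ((Bmat N).updateRow (i0 N) (c0row N)).det +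
        (((Bmat N).updateRow (iN N) (cnrow N)).det +
          (((Bmat N).updateRow (iN N) (cnrow N)).updateRow (i0 N) (c0row N)).det) := by
  have hio : i0 N ≠ iN N := Fin.ne_of_val_ne (show (0 : ℕ) ≠ N + 2 by omega)
  have hBiN : (Bmat N).updateRow (iN N) (rowT N (iN N)) = Bmat N := by
    rw [show rowT N (iN N) = Bmat N (iN N) from rfl, Matrix.updateRow_eq_self]
  have hBi0 : (Bmat N).updateRow (i0 N) (rowT N (i0 N)) = Bmat N := by
    rw [show rowT N (i0 N) = Bmat N (i0 N) from rfl, Matrix.updateRow_eq_self]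
  have hA2 : ((Bmat N).updateRow (iN N) (cnrow N)).updateRow (i0 N) (rowT N (i0 N)) =
      (Bmat N).updateRow (iN N) (cnrow N) := by
    have h4 : ((Bmat N).updateRow (iN N) (cnrow N)) (i0 N) = rowT N (i0 N) := by
      rw [Matrix.updateRow_ne hio]
      rfl
    rw [← h4, Matrix.updateRow_eq_self]
  rw [Lmat_decomp N hn, Matrix.det_updateRow_add,
    updateRow_comm (Bmat N) hio, updateRow_comm (Bmat N) hio,
    hBiN, Matrix.det_updateRow_add, Matrix.det_updateRow_add,
    hBi0, hA2]

/-! ### Coefficient extraction -/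

lemma eps_add (N : ℕ) (x y : LaurentPolynomial (TodaR (N + 3))) : (x + y).coeff 0 = x.coeff 0 + y.coeff 0 := rfl

lemma eps_C (N : ℕ) (a : TodaR (N + 3)) : (LaurentPolynomial.C a : LaurentPolynomial (TodaR (N + 3))).coeff 0 = a := by
  rw [LaurentPolynomial.C_apply, if_pos rfl]

lemma eps_CT (N : ℕ) (a : TodaR (N + 3)) (m : ℤ) (hm : m ≠ 0) :
    ((LaurentPolynomial.C a * T m : LaurentPolynomial (TodaR (N + 3)))).coeff 0 = 0 := by
  rw [← single_eq_C_mul_T, AddMonoidAlgebra.coeff_single, Finsupp.single_apply, if_neg hm]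

lemma eps_zero_form (N : ℕ) (e : ℕ) (s : TodaR (N + 3)) (m : ℤ) (hm : m ≠ 0) :
    ((((-1 : LaurentPolynomial (TodaR (N + 3))) ^ e) * (LaurentPolynomial.C s * T m) :
      LaurentPolynomial (TodaR (N + 3)))).coeff 0 = 0 := by
  have h : ((-1 : LaurentPolynomial (TodaR (N + 3))) ^ e) * (LaurentPolynomial.C s * T m) =
      LaurentPolynomial.C (((-1 : TodaR (N + 3)) ^ e) * s) * T m := by
    rw [map_mul, map_pow, map_neg, map_one, mul_assoc]
  rw [h]
  exact eps_CT N _ m hm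

lemma det_of_C {k N : ℕ} (M : Matrix (Fin k) (Fin k) (LaurentPolynomial (TodaR (N + 3))))
    (w : Matrix (Fin k) (Fin k) (TodaR (N + 3))) (h : ∀ i j, M i j = LaurentPolynomial.C (w i j)) :
    M.det = LaurentPolynomial.C w.det := by
  have hM : M = w.map LaurentPolynomial.C := by
    refine Matrix.ext fun i j => ?_
    rw [Matrix.map_apply, h]
  rw [hM, ← RingHom.mapMatrix_apply, ← RingHom.map_det]

lemma exists_det_C {k N : ℕ} (M : Matrix (Fin k) (Fin k) (LaurentPolynomial (TodaR (N + 3))))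
    (h : ∀ i j, ∃ a, M i j = LaurentPolynomial.C a) : ∃ s, M.det = LaurentPolynomial.C s := by
  choose w hw using h
  exact ⟨(Matrix.of w).det, det_of_C M (Matrix.of w) hw⟩

lemma rowT_is_C (N : ℕ) (i j : Fin (N + 3)) : ∃ a, rowT N i j = LaurentPolynomial.C a := by
  unfold rowT
  split_ifs
  · exact ⟨_, rfl⟩
  · exact ⟨_, rfl⟩
  · exact ⟨-1, by rw [map_neg, map_one]⟩
  · exact ⟨0, by rw [map_zero]⟩

lemma det_Bmat (N : ℕ) : (Bmat N).det = LaurentPolynomial.C (oP N (N + 3)) := by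
  have h : ∀ i j, Bmat N i j = LaurentPolynomial.C (Mt N 0 (N + 3) i j) := by
    intro i j
    have hx : idx N (0 + (i : ℕ)) = i := by
      rw [idx_eq N _ (by have := i.isLt; omega)]
      exact Fin.ext (show 0 + (i : ℕ) = (i : ℕ) from by omega)
    show rowT N i j = _
    rw [Mt_apply, hx]
    unfold rowT
    split_ifs <;> first | rfl | (rw [map_neg, map_one]) | (rw [map_zero])
  rw [det_of_C _ _ h, det_Mt0]


/-! ### The three corner terms -/

lemma eps_detA3 (N : ℕ) : (((Bmat N).updateRow (i0 N) (c0row N)).det).coeff 0 = 0 := by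
  set A := (Bmat N).updateRow (i0 N) (c0row N) with hA
  have h00 : (0 : Fin (N + 3)) = i0 N := Fin.ext (by simp [i0])
  have hrow : ∀ j, A (0 : Fin (N + 3)) j = c0row N j := by
    intro j
    rw [h00, hA, Matrix.updateRow_self]
  have hdet := Matrix.det_succ_row_zero (n := N + 2) A
  have hsum : A.det = (-1 : LaurentPolynomial (TodaR (N + 3))) ^ ((Fin.last (N + 2) : ℕ)) *
      A 0 (Fin.last (N + 2)) * (A.submatrix Fin.succ (Fin.last (N + 2)).succAbove).det := by
    rw [hdet]
    apply Finset.sum_eq_single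
    · intro b _ hb
      have hbv : (b : ℕ) ≠ N + 2 := fun hc => hb (Fin.ext (by rw [hc, Fin.val_last]))
      rw [hrow, c0row, if_neg hbv, mul_zero, zero_mul]
    · intro h
      exact absurd (Finset.mem_univ _) h
  obtain ⟨s, hs⟩ : ∃ s, (A.submatrix Fin.succ (Fin.last (N + 2)).succAbove).det =
      LaurentPolynomial.C s := by
    apply exists_det_C
    intro i j
    rw [Matrix.submatrix_apply]
    have hne : Fin.succ i ≠ i0 N :=
      Fin.ne_of_val_ne (show (i : ℕ) + 1 ≠ 0 by omega)
    rw [hA, Matrix.updateRow_ne hne]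
    exact rowT_is_C N _ _
  rw [hsum, hrow, c0row, if_pos (by rw [Fin.val_last]), hs]
  have hform : (-1 : LaurentPolynomial (TodaR (N + 3))) ^ ((Fin.last (N + 2) : ℕ)) *
      (-(T 1)) * LaurentPolynomial.C s =
      ((-1 : LaurentPolynomial (TodaR (N + 3))) ^ ((Fin.last (N + 2) : ℕ) + 1)) *
        (LaurentPolynomial.C s * T 1) := by
    ring
  rw [hform]
  exact eps_zero_form N _ s 1 one_ne_zero

lemma eps_detA2 (N : ℕ) : (((Bmat N).updateRow (iN N) (cnrow N)).det).coeff 0 = 0 := by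
  set A := (Bmat N).updateRow (iN N) (cnrow N) with hA
  have hlast : (Fin.last (N + 2) : Fin (N + 3)) = iN N := Fin.ext rfl
  have hrow : ∀ j, A (Fin.last (N + 2)) j = cnrow N j := by
    intro j
    rw [hlast, hA, Matrix.updateRow_self]
  have hdet := Matrix.det_succ_row (n := N + 2) A (Fin.last (N + 2))
  have h0v : ((0 : Fin (N + 3)) : ℕ) = 0 := rfl
  have hsum : A.det = (-1 : LaurentPolynomial (TodaR (N + 3))) ^
      ((Fin.last (N + 2) : ℕ) + ((0 : Fin (N + 3)) : ℕ)) *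
      A (Fin.last (N + 2)) (0 : Fin (N + 3)) *
      (A.submatrix (Fin.last (N + 2)).succAbove (0 : Fin (N + 3)).succAbove).det := by
    rw [hdet]
    apply Finset.sum_eq_single
    · intro b _ hb
      have hbv : (b : ℕ) ≠ 0 := fun hc => hb (Fin.ext (by rw [hc, h0v]))
      rw [hrow, cnrow, if_neg hbv, mul_zero, zero_mul]
    · intro h
      exact absurd (Finset.mem_univ _) h
  obtain ⟨s, hs⟩ : ∃ s, (A.submatrix (Fin.last (N + 2)).succAbove
      (0 : Fin (N + 3)).succAbove).det = LaurentPolynomial.C s := by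
    apply exists_det_C
    intro i j
    rw [Matrix.submatrix_apply, Fin.succAbove_last]
    have hne : Fin.castSucc i ≠ iN N :=
      Fin.ne_of_val_ne (show (i : ℕ) ≠ N + 2 by have := i.isLt; omega)
    rw [hA, Matrix.updateRow_ne hne]
    exact rowT_is_C N _ _
  rw [hsum, hrow, cnrow, if_pos h0v, hs]
  have hform : (-1 : LaurentPolynomial (TodaR (N + 3))) ^
      ((Fin.last (N + 2) : ℕ) + ((0 : Fin (N + 3)) : ℕ)) *
      (LaurentPolynomial.C (Qv (⟨N + 2, by omega⟩ : Fin (N + 3))) * T (-1)) *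
      LaurentPolynomial.C s =
      ((-1 : LaurentPolynomial (TodaR (N + 3))) ^
        ((Fin.last (N + 2) : ℕ) + ((0 : Fin (N + 3)) : ℕ))) *
        (LaurentPolynomial.C (Qv (⟨N + 2, by omega⟩ : Fin (N + 3)) * s) * T (-1)) := by
    rw [map_mul]
    ring
  rw [hform]
  exact eps_zero_form N _ _ (-1) (by norm_num)

lemma eps_detA4 (N : ℕ) :
    ((((Bmat N).updateRow (iN N) (cnrow N)).updateRow (i0 N) (c0row N)).det).coeff 0 =
      Qv (⟨N + 2, by omega⟩ : Fin (N + 3)) * pP N (N + 2) := by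
  set A := ((Bmat N).updateRow (iN N) (cnrow N)).updateRow (i0 N) (c0row N) with hA
  have hio : i0 N ≠ iN N := Fin.ne_of_val_ne (show (0 : ℕ) ≠ N + 2 by omega)
  have h00 : (0 : Fin (N + 3)) = i0 N := Fin.ext (by simp [i0])
  have hrow0 : ∀ j, A (0 : Fin (N + 3)) j = c0row N j := by
    intro j
    rw [h00, hA, Matrix.updateRow_self]
  -- expand along row 0
  have hdet := Matrix.det_succ_row_zero (n := N + 2) A
  have hsum : A.det = (-1 : LaurentPolynomial (TodaR (N + 3))) ^ ((Fin.last (N + 2) : ℕ)) *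
      A 0 (Fin.last (N + 2)) * (A.submatrix Fin.succ (Fin.last (N + 2)).succAbove).det := by
    rw [hdet]
    apply Finset.sum_eq_single
    · intro b _ hb
      have hbv : (b : ℕ) ≠ N + 2 := fun hc => hb (Fin.ext (by rw [hc, Fin.val_last]))
      rw [hrow0, c0row, if_neg hbv, mul_zero, zero_mul]
    · intro h
      exact absurd (Finset.mem_univ _) h
  set M4 := A.submatrix Fin.succ (Fin.last (N + 2)).succAbove with hM4
  -- expand the minor along its last row
  have hrowlast : ∀ j : Fin (N + 2), M4 (Fin.last (N + 1)) j = cnrow N (Fin.castSucc j) := by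
    intro j
    rw [hM4, Matrix.submatrix_apply, Fin.succAbove_last]
    have hsl : Fin.succ (Fin.last (N + 1)) = iN N := Fin.ext rfl
    rw [hsl, hA]
    rw [Matrix.updateRow_ne (Ne.symm hio), Matrix.updateRow_self]
  have hdet4 := Matrix.det_succ_row (n := N + 1) M4 (Fin.last (N + 1))
  have h0v2 : ((0 : Fin (N + 2)) : ℕ) = 0 := rfl
  have hsum4 : M4.det = (-1 : LaurentPolynomial (TodaR (N + 3))) ^
      ((Fin.last (N + 1) : ℕ) + ((0 : Fin (N + 2)) : ℕ)) *
      M4 (Fin.last (N + 1)) (0 : Fin (N + 2)) *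
      (M4.submatrix (Fin.last (N + 1)).succAbove (0 : Fin (N + 2)).succAbove).det := by
    rw [hdet4]
    apply Finset.sum_eq_single
    · intro b _ hb
      have hbv : ((Fin.castSucc b : Fin (N + 3)) : ℕ) ≠ 0 := by
        intro hc
        exact hb (Fin.ext (by rw [← Fin.coe_castSucc b, hc, h0v2]))
      rw [hrowlast, cnrow, if_neg hbv, mul_zero, zero_mul]
    · intro h
      exact absurd (Finset.mem_univ _) h
  -- the innermost minor is the C-image of `Mt N 1 (N + 1)`
  have hC : ∀ i j : Fin (N + 1),
      (M4.submatrix (Fin.last (N + 1)).succAbove (0 : Fin (N + 2)).succAbove) i j =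
        LaurentPolynomial.C (Mt N 1 (N + 1) i j) := by
    intro i j
    rw [Matrix.submatrix_apply, Fin.succAbove_last, Fin.succAbove_zero, hM4,
      Matrix.submatrix_apply, Fin.succAbove_last]
    have hne0 : Fin.succ (Fin.castSucc i) ≠ i0 N :=
      Fin.ne_of_val_ne (show (i : ℕ) + 1 ≠ 0 by omega)
    have hneN : Fin.succ (Fin.castSucc i) ≠ iN N :=
      Fin.ne_of_val_ne (show (i : ℕ) + 1 ≠ N + 2 by have := i.isLt; omega)
    rw [hA, Matrix.updateRow_ne hne0, Matrix.updateRow_ne hneN]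
    show rowT N (Fin.succ (Fin.castSucc i)) (Fin.castSucc (Fin.succ j)) = _
    have hrv : ((Fin.succ (Fin.castSucc i) : Fin (N + 3)) : ℕ) = (i : ℕ) + 1 := rfl
    have hcv : ((Fin.castSucc (Fin.succ j) : Fin (N + 3)) : ℕ) = (j : ℕ) + 1 := rfl
    have hXr : Xv (Fin.succ (Fin.castSucc i)) = Xv (idx N (1 + (i : ℕ))) := by
      congr 1
      rw [idx_eq N _ (by have := i.isLt; omega)]
      exact Fin.ext (show (i : ℕ) + 1 = 1 + (i : ℕ) from by omega)
    have hQr : Qv (Fin.succ (Fin.castSucc i)) = Qv (idx N (1 + (i : ℕ))) := by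
      congr 1
      rw [idx_eq N _ (by have := i.isLt; omega)]
      exact Fin.ext (show (i : ℕ) + 1 = 1 + (i : ℕ) from by omega)
    rw [Mt_apply]
    unfold rowT
    rw [hrv, hcv, hXr, hQr]
    split_ifs <;> first | (exfalso; omega) | rfl | (rw [map_neg, map_one]) | (rw [map_zero])
  have hs : (M4.submatrix (Fin.last (N + 1)).succAbove (0 : Fin (N + 2)).succAbove).det =
      LaurentPolynomial.C (pP N (N + 2)) := by
    rw [det_of_C _ _ hC, det_Mt1]
  -- put everything together
  rw [hsum, hrow0, c0row, if_pos (by rw [Fin.val_last]), hsum4, hrowlast, cnrow,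
    if_pos (show ((Fin.castSucc (0 : Fin (N+2)) : Fin (N + 3)) : ℕ) = 0 from rfl), hs]
  have hval1 : ((Fin.last (N + 2) : Fin (N + 3)) : ℕ) = N + 2 := rfl
  have hval2 : ((Fin.last (N + 1) : Fin (N + 2)) : ℕ) = N + 1 := rfl
  rw [hval1, hval2, h0v2]
  have hform : (-1 : LaurentPolynomial (TodaR (N + 3))) ^ (N + 2) * (-(T 1)) *
      ((-1 : LaurentPolynomial (TodaR (N + 3))) ^ (N + 1 + 0) *
        (LaurentPolynomial.C (Qv (⟨N + 2, by omega⟩ : Fin (N + 3))) * T (-1)) *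
        LaurentPolynomial.C (pP N (N + 2))) =
      ((-1 : LaurentPolynomial (TodaR (N + 3))) ^ (2 * N + 4)) * ((T 1 : LaurentPolynomial (TodaR (N+3))) * T (-1)) *
        (LaurentPolynomial.C (Qv (⟨N + 2, by omega⟩ : Fin (N + 3))) *
          LaurentPolynomial.C (pP N (N + 2))) := by
    ring
  have he : ((-1 : LaurentPolynomial (TodaR (N + 3))) ^ (2 * N + 4)) = 1 := by
    rw [show 2 * N + 4 = 2 * (N + 2) from by ring, pow_mul]
    norm_num
  rw [hform, he, ← T_add, show (1 : ℤ) + (-1) = 0 from by norm_num, T_zero]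
  simp only [one_mul, mul_one]
  rw [← map_mul]
  exact eps_C N _

/-! ### Conclusion on the determinant side -/

lemma eps_det (N : ℕ) (hn : 3 ≤ N + 3) :
    ((Lmat (N + 3) hn).det).coeff 0 =
      oP N (N + 3) + Qv (⟨N + 2, by omega⟩ : Fin (N + 3)) * pP N (N + 2) := by
  rw [det_decomp N hn, eps_add, eps_add, eps_add, det_Bmat, eps_C, eps_detA3, eps_detA2,
    eps_detA4]
  ring

end TodaAux

/-- For every `n ≥ 3` and `0 ≤ k ≤ n`, the coefficient of `μ^k` in
`(D_n ∘ ⋯ ∘ D_1)(S_n)` equals the coefficient of `μ^k z^0` in `det 𝓛_n`: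
the quantum relations `QS^k_n` coincide with the conserved quantities `P^k_n`
of the periodic Toda lattice. -/
theorem QS_eq_P (n : ℕ) (hn : 3 ≤ n) (k : ℕ) (hk : k ≤ n) :
    (MvPolynomial.optionEquivLeft ℂ (Fin n ⊕ Fin n) (DfoldUpTo n n le_rfl (Sn n))).coeff k =
      (MvPolynomial.optionEquivLeft ℂ (Fin n ⊕ Fin n)
        ((Matrix.det (Lmat n hn) : LaurentPolynomial (TodaR n)).coeff 0)).coeff k := by
  obtain ⟨N, rfl⟩ : ∃ N, n = N + 3 := ⟨n - 3, by omega⟩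
  have key : DfoldUpTo (N + 3) (N + 3) le_rfl (Sn (N + 3)) =
      ((Matrix.det (Lmat (N + 3) hn) : LaurentPolynomial (TodaR (N + 3))).coeff 0) := by
    rw [TodaAux.fold_total, TodaAux.eps_det N hn]
  rw [key]
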